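/- There exists κ₀ > 0 such that for every κ ≥ κ₀, every α ≥ 0, and every finite set Ω ⊆ ℤ³, the sum over all finite collections 𝒞 of pairwise distinct connected subsets of Ω (including the empty collection, whose product is 1) of Π_{X∈𝒞} α·e^{−κ·|X|} is at most exp(α·|Ω|). -/

import Mathlib

/-- Two points of `ℤ³` are adjacent if they are at `ℓ∞`-distance at most 1
(touching, possibly only at corners or edges). -/
def ZAdj (a b : Fin 3 → ℤ) : Prop := ∀ i, |a i - b i| ≤ 1

/-- A finite set `X ⊆ ℤ³` is connected if it is nonempty and any two of its points
are joined by a chain of points of `X` with consecutive points adjacent. -/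
def ZConnected (X : Finset (Fin 3 → ℤ)) : Prop :=
  X.Nonempty ∧ ∀ x ∈ X, ∀ y ∈ X,
    Relation.ReflTransGen (fun a b => a ∈ X ∧ b ∈ X ∧ ZAdj a b) x y

abbrev V3 := Fin 3 → ℤ

lemma zadj_refl (a : V3) : ZAdj a a := fun i => by simp

lemma zadj_symm {a b : V3} (h : ZAdj a b) : ZAdj b a := fun i => by
  rw [abs_sub_comm]; exact h i

lemma exists_ne_step {r : V3 → V3 → Prop} {x y : V3}
    (h : Relation.ReflTransGen r x y) (hne : y ≠ x) : ∃ z, z ≠ x ∧ r x z := by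
  induction h with
  | refl => exact absurd rfl hne
  | tail hab hbc ih =>
      rename_i b c
      by_cases hb : b = x
      · exact ⟨c, hne, hb ▸ hbc⟩
      · exact ih hb

lemma exists_walk : ∀ (n : ℕ) (X : Finset V3), X.card ≤ n → ZConnected X →
    ∀ x ∈ X, ∃ l : List V3, l ≠ [] ∧ l.head? = some x ∧ l.getLast? = some x ∧
      l.Chain' ZAdj ∧ (∀ z ∈ l, z ∈ X) ∧ (∀ z ∈ X, z ∈ l) ∧
      l.length ≤ 2 * X.card - 1 := by
  intro n
  induction n with
  | zero =>
      intro X hcard hcon x hx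
      exact absurd (Finset.card_pos.2 ⟨x, hx⟩) (by omega)
  | succ n ih =>
      intro X hcard hcon x hx
      classical
      by_cases hX : X = {x}
      · subst hX
        exact ⟨[x], by simp, by simp, by simp, List.isChain_singleton x, by simp, by simp, by simp⟩
      · -- find a neighbor y₀ of x, distinct from x
        obtain ⟨y, hy, hyx⟩ : ∃ y ∈ X, y ≠ x := by
          by_contra hcontra
          push_neg at hcontra
          exact hX (Finset.eq_singleton_iff_unique_mem.2 ⟨hx, hcontra⟩)
        obtain ⟨y₀, hy₀x, _, hy₀X, hadj⟩ := exists_ne_step (hcon.2 x hx y hy) hyx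
        set Y : Finset V3 := X.erase x with hY
        set relY : V3 → V3 → Prop := fun a b => a ∈ Y ∧ b ∈ Y ∧ ZAdj a b with hrelY
        have relYsymm : Symmetric relY := fun a b h => ⟨h.2.1, h.1, zadj_symm h.2.2⟩
        set C : Finset V3 := Y.filter (Relation.ReflTransGen relY y₀) with hC
        have hy₀Y : y₀ ∈ Y := Finset.mem_erase.2 ⟨hy₀x, hy₀X⟩
        have hy₀C : y₀ ∈ C := Finset.mem_filter.2 ⟨hy₀Y, .refl⟩
        have hCY : C ⊆ Y := Finset.filter_subset _ _
        have hCX : C ⊆ X := hCY.trans (Finset.erase_subset _ _)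
        have hxC : x ∉ C := fun h => (Finset.mem_erase.1 (hCY h)).1 rfl
        have hCmem : ∀ {a b : V3}, a ∈ C → relY a b → b ∈ C := by
          intro a b ha h
          exact Finset.mem_filter.2 ⟨h.2.1, (Finset.mem_filter.1 ha).2.tail h⟩
        -- C is connected
        set relC : V3 → V3 → Prop := fun a b => a ∈ C ∧ b ∈ C ∧ ZAdj a b with hrelC
        have relCsymm : Symmetric relC := fun a b h => ⟨h.2.1, h.1, zadj_symm h.2.2⟩
        have key : ∀ b, Relation.ReflTransGen relY y₀ b → Relation.ReflTransGen relC y₀ b := by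
          intro b h
          induction h with
          | refl => exact .refl
          | tail h step ih2 =>
              rename_i b' c'
              exact ih2.tail ⟨Finset.mem_filter.2 ⟨step.1, h⟩,
                Finset.mem_filter.2 ⟨step.2.1, h.tail step⟩, step.2.2⟩
        have hconC : ZConnected C := by
          refine ⟨⟨y₀, hy₀C⟩, ?_⟩
          intro a ha b hb
          exact ((fun h => (@Relation.ReflTransGen.stdSymm _ _ ⟨fun a b h => relCsymm h⟩).symm _ _ h)
            (key a (Finset.mem_filter.1 ha).2)).trans (key b (Finset.mem_filter.1 hb).2)
        -- X' := X \ C is connected and contains x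
        set X' : Finset V3 := X \ C with hX'
        have hxX' : x ∈ X' := Finset.mem_sdiff.2 ⟨hx, hxC⟩
        set relX : V3 → V3 → Prop := fun a b => a ∈ X ∧ b ∈ X ∧ ZAdj a b with hrelX
        set relX' : V3 → V3 → Prop := fun a b => a ∈ X' ∧ b ∈ X' ∧ ZAdj a b with hrelX'
        have relX'symm : Symmetric relX' := fun a b h => ⟨h.2.1, h.1, zadj_symm h.2.2⟩
        have claim : ∀ a ∈ X', Relation.ReflTransGen relX' a x := by
          intro a ha
          have h : Relation.ReflTransGen relX a x :=
            hcon.2 a (Finset.mem_sdiff.1 ha).1 x hx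
          revert ha
          induction h using Relation.ReflTransGen.head_induction_on with
          | refl => intro _; exact .refl
          | head h' h ih2 =>
              rename_i b c
              intro hbX'
              by_cases hbx : b = x
              · exact hbx ▸ .refl
              by_cases hcx : c = x
              · exact Relation.ReflTransGen.single ⟨hbX', hcx ▸ hxX', hcx ▸ h'.2.2⟩
              by_cases hcC : c ∈ C
              · exfalso
                have hbY : b ∈ Y := Finset.mem_erase.2 ⟨hbx, h'.1⟩
                have hcY : c ∈ Y := Finset.mem_erase.2 ⟨hcx, h'.2.1⟩
                exact (Finset.mem_sdiff.1 hbX').2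
                  (hCmem hcC ⟨hcY, hbY, zadj_symm h'.2.2⟩)
              · have hcX' : c ∈ X' := Finset.mem_sdiff.2 ⟨h'.2.1, hcC⟩
                exact (ih2 hcX').head ⟨hbX', hcX', h'.2.2⟩
        have hconX' : ZConnected X' := by
          refine ⟨⟨x, hxX'⟩, ?_⟩
          intro a ha b hb
          exact (claim a ha).trans
            ((fun h => (@Relation.ReflTransGen.stdSymm _ _ ⟨fun a b h => relX'symm h⟩).symm _ _ h) (claim b hb))
        -- cardinalities
        have hsum : X'.card + C.card = X.card := Finset.card_sdiff_add_card_eq_card hCX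
        have hC1 : 1 ≤ C.card := Finset.card_pos.2 ⟨y₀, hy₀C⟩
        have hX'1 : 1 ≤ X'.card := Finset.card_pos.2 ⟨x, hxX'⟩
        obtain ⟨l₁, hl₁ne, hl₁h, hl₁l, hl₁c, hl₁m, hl₁cov, hl₁len⟩ :=
          ih X' (by omega) hconX' x hxX'
        obtain ⟨l₂, hl₂ne, hl₂h, hl₂l, hl₂c, hl₂m, hl₂cov, hl₂len⟩ :=
          ih C (by omega) hconC y₀ hy₀C
        refine ⟨l₁ ++ (l₂ ++ [x]), by simp, ?_, ?_, ?_, ?_, ?_, ?_⟩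
        · rw [List.head?_append_of_ne_nil _ hl₁ne]; exact hl₁h
        · rw [← List.append_assoc, List.getLast?_concat]
        · change List.IsChain ZAdj _; rw [List.isChain_append]
          refine ⟨hl₁c, ?_, ?_⟩
          · rw [List.isChain_append]
            refine ⟨hl₂c, by simp, ?_⟩
            intro p hp q hq
            rw [hl₂l] at hp; simp at hp hq
            subst hp hq; exact zadj_symm hadj
          · intro p hp q hq
            rw [hl₁l] at hp
            rw [List.head?_append_of_ne_nil _ hl₂ne, hl₂h] at hq
            simp at hp hq
            subst hp hq; exact hadj
        · intro z hz
          simp at hz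
          rcases hz with hz | hz | hz
          · exact (Finset.mem_sdiff.1 (hl₁m z hz)).1
          · exact hCX (hl₂m z hz)
          · exact hz ▸ hx
        · intro z hz
          simp
          by_cases hzC : z ∈ C
          · exact Or.inr (Or.inl (hl₂cov z hzC))
          · exact Or.inl (hl₁cov z (Finset.mem_sdiff.2 ⟨hz, hzC⟩))
        · simp only [List.length_append, List.length_singleton]
          omega

noncomputable def DSet : Finset V3 := Fintype.piFinset (fun _ : Fin 3 => Finset.Icc (-1:ℤ) 1)

lemma card_DSet : DSet.card = 27 := by
  simp [DSet, Fintype.card_piFinset]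

lemma sub_mem_DSet {a b : V3} (h : ZAdj a b) : b - a ∈ DSet := by
  rw [DSet, Fintype.mem_piFinset]
  intro i
  have := h i
  rw [abs_le] at this
  simp only [Pi.sub_apply, Finset.mem_Icc]
  omega

-- walk function basic facts
lemma wf_zero {v : V3} {l : List V3} (hh : l.head? = some v) : l.getD 0 v = v := by
  cases l with
  | nil => simp
  | cons a t => simp at hh ⊢; exact hh

lemma wf_adj {v : V3} {l : List V3} (hh : l.getLast? = some v)
    (hc : l.Chain' ZAdj) (i : ℕ) : ZAdj (l.getD i v) (l.getD (i+1) v) := by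
  rcases lt_trichotomy (i+1) l.length with h | h | h
  · have hi : i < l.length := by omega
    rw [List.getD_eq_getElem _ _ hi, List.getD_eq_getElem _ _ h]
    exact List.isChain_iff_getElem.1 hc i (by omega)
  · have hi : i < l.length := by omega
    rw [List.getD_eq_getElem _ _ hi, List.getD_eq_default _ _ (by omega)]
    have : l.getLast? = l[i]? := by rw [List.getLast?_eq_getElem?]; congr 1; omega
    rw [hh] at this
    rw [List.getElem?_eq_getElem hi] at this
    have hv : l[i] = v := by injection this.symm
    rw [hv]; exact zadj_refl v
  · rw [List.getD_eq_default _ _ (by omega), List.getD_eq_default _ _ (by omega)]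
    exact zadj_refl v

open scoped Classical in
lemma count_connected (Ω : Finset V3) (v : V3) (n : ℕ) (hn : 1 ≤ n) :
    ((Ω.powerset.filter (fun X => ZConnected X ∧ v ∈ X ∧ X.card = n)).card : ℕ)
      ≤ 27 ^ (2 * n - 2) := by
  classical
  set T := Ω.powerset.filter (fun X => ZConnected X ∧ v ∈ X ∧ X.card = n) with hT
  -- choice of a walk for each X
  let L : Finset V3 → List V3 := fun X =>
    if h : ZConnected X ∧ v ∈ X then
      Classical.choose (exists_walk X.card X le_rfl h.1 v h.2) else []
  have hLspec : ∀ X : Finset V3, ∀ h : ZConnected X ∧ v ∈ X,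
      (L X) ≠ [] ∧ (L X).head? = some v ∧ (L X).getLast? = some v ∧
      (L X).Chain' ZAdj ∧ (∀ z ∈ (L X), z ∈ X) ∧ (∀ z ∈ X, z ∈ (L X)) ∧
      (L X).length ≤ 2 * X.card - 1 := by
    intro X h
    have : L X = Classical.choose (exists_walk X.card X le_rfl h.1 v h.2) := by
      simp only [L, dif_pos h]
    rw [this]
    exact Classical.choose_spec (exists_walk X.card X le_rfl h.1 v h.2)
  let wf : Finset V3 → ℕ → V3 := fun X i => (L X).getD i v
  let f : Finset V3 → (Fin (2*n-2) → V3) := fun X j => wf X (j+1) - wf X j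
  have hmem : ∀ X ∈ T, ∀ (h : ZConnected X ∧ v ∈ X), True := fun _ _ _ => trivial
  have hTmem : ∀ X ∈ T, ZConnected X ∧ v ∈ X ∧ X.card = n := by
    intro X hX; exact (Finset.mem_filter.1 hX).2
  -- image identity
  have himg : ∀ X ∈ T, X = (Finset.range (2*n-1)).image (wf X) := by
    intro X hX
    obtain ⟨hcon, hv, hcard⟩ := hTmem X hX
    obtain ⟨hne, hh, hl, hc, hm, hcov, hlen⟩ := hLspec X ⟨hcon, hv⟩
    apply Finset.Subset.antisymm
    · intro z hz
      obtain ⟨i, hi, hiz⟩ := List.mem_iff_getElem.1 (hcov z hz)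
      refine Finset.mem_image.2 ⟨i, Finset.mem_range.2 ?_, ?_⟩
      · have := hlen; omega
      · simp only [wf]; rw [List.getD_eq_getElem _ _ hi]; exact hiz
    · intro z hz
      obtain ⟨i, _, hiz⟩ := Finset.mem_image.1 hz
      by_cases hi : i < (L X).length
      · rw [← hiz]; simp only [wf]; rw [List.getD_eq_getElem _ _ hi]
        exact hm _ (List.getElem_mem _)
      · rw [← hiz]; simp only [wf]; rw [List.getD_eq_default _ _ (by omega)]
        exact hv
  have key : ∀ X ∈ T, ∀ i, i ≤ 2*n-2 → wf X i = v + ∑ j ∈ Finset.range i,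
      (wf X (j+1) - wf X j) := by
    intro X hX i hi
    induction i with
    | zero =>
        obtain ⟨hcon, hv, hcard⟩ := hTmem X hX
        obtain ⟨hne, hh, _⟩ := hLspec X ⟨hcon, hv⟩
        rw [Finset.sum_range_zero, add_zero]
        exact wf_zero hh
    | succ i ih =>
        rw [Finset.sum_range_succ, ← add_assoc, ← ih (by omega)]
        abel
  calc T.card ≤ (Fintype.piFinset (fun _ : Fin (2*n-2) => DSet)).card := by
        apply Finset.card_le_card_of_injOn f
        · intro X hX
          obtain ⟨hcon, hv, hcard⟩ := hTmem X hX
          obtain ⟨hne, hh, hl, hc, _⟩ := hLspec X ⟨hcon, hv⟩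
          exact Fintype.mem_piFinset.2 fun j => sub_mem_DSet (wf_adj hl hc (j : ℕ))
        · intro X₁ h₁ X₂ h₂ hf
          rw [Finset.mem_coe] at h₁ h₂
          have hwf : ∀ i, i ≤ 2*n-2 → wf X₁ i = wf X₂ i := by
            intro i hi
            rw [key X₁ h₁ i hi, key X₂ h₂ i hi]
            congr 1
            apply Finset.sum_congr rfl
            intro j hj
            have hj' : j < 2*n-2 := lt_of_lt_of_le (Finset.mem_range.1 hj) hi
            exact congrFun hf ⟨j, hj'⟩
          rw [himg X₁ h₁, himg X₂ h₂]
          apply Finset.image_congr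
          intro i hi
          rw [Finset.mem_coe, Finset.mem_range] at hi
          exact hwf i (by omega)
    _ = 27 ^ (2*n-2) := by rw [Fintype.card_piFinset]; simp [card_DSet]

lemma exp_kappa_ge {κ : ℝ} (hκ : 8 ≤ κ) : (1458 : ℝ) ≤ Real.exp κ := by
  have h27 : (2.7 : ℝ) ≤ Real.exp 1 := le_of_lt (by linarith [Real.exp_one_gt_d9])
  have h1 : (2.7 : ℝ)^(8:ℕ) ≤ (Real.exp 1)^(8:ℕ) :=
    pow_le_pow_left₀ (by norm_num) h27 8
  have h2 : Real.exp 8 = (Real.exp 1)^(8:ℕ) := by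
    rw [← Real.exp_nat_mul]; norm_num
  have h3 : Real.exp 8 ≤ Real.exp κ := Real.exp_le_exp.2 hκ
  nlinarith [h1, h2, h3]

lemma r_le_half {κ : ℝ} (hκ : 8 ≤ κ) : (729 : ℝ) * Real.exp (-κ) ≤ 1/2 := by
  have h := exp_kappa_ge hκ
  have hpos : (0:ℝ) < Real.exp κ := Real.exp_pos κ
  rw [Real.exp_neg]
  have h2 : (Real.exp κ)⁻¹ ≤ 1458⁻¹ := by
    apply inv_anti₀ (by norm_num) h
  calc (729:ℝ) * (Real.exp κ)⁻¹ ≤ 729 * 1458⁻¹ := by nlinarith [Real.exp_pos κ]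
    _ = 1/2 := by norm_num

open scoped Classical in
lemma sum_exp_le_one {κ : ℝ} (hκ : 8 ≤ κ) (Ω : Finset V3) (v : V3) :
    ∑ X ∈ Ω.powerset.filter (fun X => ZConnected X ∧ v ∈ X),
      Real.exp (-κ * X.card) ≤ 1 := by
  set T := Ω.powerset.filter (fun X => ZConnected X ∧ v ∈ X) with hT
  have hmaps : ∀ X ∈ T, X.card ∈ Finset.range (Ω.card + 1) := by
    intro X hX
    rw [Finset.mem_range]
    exact Nat.lt_succ_of_le (Finset.card_le_card (Finset.mem_powerset.1 (Finset.mem_filter.1 hX).1))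
  rw [← Finset.sum_fiberwise_of_maps_to hmaps (fun X => Real.exp (-κ * X.card))]
  have hterm : ∀ m ∈ Finset.range (Ω.card + 1),
      ∑ X ∈ T.filter (fun X => X.card = m), Real.exp (-κ * X.card)
        = ((T.filter (fun X => X.card = m)).card : ℝ) * Real.exp (-κ * m) := by
    intro m _
    rw [Finset.sum_congr rfl (fun X hX => by
      rw [(Finset.mem_filter.1 hX).2]), Finset.sum_const, nsmul_eq_mul]
  have hbound : ∀ i : ℕ, ∑ X ∈ T.filter (fun X => X.card = i + 1),
      Real.exp (-κ * (i+1)) ≤ (1/2)^(i+1) := by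
    intro i
    rw [Finset.sum_const, nsmul_eq_mul]
    have hcount : ((T.filter (fun X => X.card = i + 1)).card : ℕ) ≤ 729 ^ i := by
      have heq : T.filter (fun X => X.card = i + 1)
          = Ω.powerset.filter (fun X => ZConnected X ∧ v ∈ X ∧ X.card = i + 1) := by
        rw [hT, Finset.filter_filter]
        apply Finset.filter_congr
        intro X _
        tauto
      rw [heq]
      calc _ ≤ 27 ^ (2 * (i+1) - 2) := count_connected Ω v (i+1) (by omega)
        _ = 729 ^ i := by
            rw [show 2 * (i+1) - 2 = 2 * i by omega, pow_mul]
            norm_num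
    have hexp : Real.exp (-κ * (i+1)) = Real.exp (-κ) ^ (i+1) := by
      rw [← Real.exp_nat_mul]
      congr 1
      push_cast
      ring
    have hexp_pos : (0:ℝ) < Real.exp (-κ) := Real.exp_pos _
    calc ((T.filter (fun X => X.card = i + 1)).card : ℝ) * Real.exp (-κ * (i+1))
        ≤ (729:ℝ) ^ i * Real.exp (-κ * (i+1)) := by
          apply mul_le_mul_of_nonneg_right _ (le_of_lt (Real.exp_pos _))
          exact_mod_cast le_trans hcount (by norm_num)
      _ ≤ (729:ℝ) ^ (i+1) * Real.exp (-κ) ^ (i+1) := by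
          rw [hexp]
          apply mul_le_mul_of_nonneg_right _ (by positivity)
          apply pow_le_pow_right₀ (by norm_num) (by omega)
      _ = ((729:ℝ) * Real.exp (-κ)) ^ (i+1) := by rw [mul_pow]
      _ ≤ (1/2)^(i+1) := pow_le_pow_left₀ (by positivity) (r_le_half hκ) _
  -- assemble
  rw [Finset.sum_range_succ']
  have h0 : ∑ X ∈ T.filter (fun X => X.card = 0), Real.exp (-κ * X.card) = 0 := by
    apply Finset.sum_eq_zero
    intro X hX
    exfalso
    obtain ⟨hX1, hX2⟩ := Finset.mem_filter.1 hX
    obtain ⟨⟨hne, _⟩, _⟩ := (Finset.mem_filter.1 hX1).2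
    have := Finset.card_pos.2 hne
    omega
  rw [h0, add_zero]
  calc ∑ i ∈ Finset.range Ω.card, ∑ X ∈ T.filter (fun X => X.card = i + 1),
        Real.exp (-κ * X.card)
      ≤ ∑ i ∈ Finset.range Ω.card, (1/2:ℝ)^(i+1) := by
        apply Finset.sum_le_sum
        intro i _
        calc ∑ X ∈ T.filter (fun X => X.card = i + 1), Real.exp (-κ * X.card)
            = ∑ X ∈ T.filter (fun X => X.card = i + 1), Real.exp (-κ * (i+1)) := by
              apply Finset.sum_congr rfl
              intro X hX
              rw [(Finset.mem_filter.1 hX).2]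
              norm_num
          _ ≤ (1/2)^(i+1) := hbound i
    _ = (1/2) * ∑ i ∈ Finset.range Ω.card, (1/2:ℝ)^i := by
        rw [Finset.mul_sum]
        apply Finset.sum_congr rfl
        intro i _
        ring
    _ ≤ (1/2) * 2 := by
        apply mul_le_mul_of_nonneg_left (sum_geometric_two_le _) (by norm_num)
    _ = 1 := by norm_num

open scoped Classical in
lemma total_sum {κ : ℝ} (hκ : 8 ≤ κ) (Ω : Finset V3) :
    ∑ X ∈ Ω.powerset.filter ZConnected, Real.exp (-κ * X.card) ≤ (Ω.card : ℝ) := by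
  set S := Ω.powerset.filter ZConnected with hS
  have step1 : ∑ X ∈ S, Real.exp (-κ * X.card)
      ≤ ∑ X ∈ S, (X.card : ℝ) * Real.exp (-κ * X.card) := by
    apply Finset.sum_le_sum
    intro X hX
    have h1 : 1 ≤ X.card := Finset.card_pos.2 ((Finset.mem_filter.1 hX).2).1
    have : (1:ℝ) ≤ (X.card : ℝ) := by exact_mod_cast h1
    nlinarith [Real.exp_pos (-κ * X.card)]
  have step2 : ∑ X ∈ S, (X.card : ℝ) * Real.exp (-κ * X.card)
      = ∑ v ∈ Ω, ∑ X ∈ S, (if v ∈ X then Real.exp (-κ * X.card) else 0) := by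
    rw [Finset.sum_comm]
    apply Finset.sum_congr rfl
    intro X hX
    rw [Finset.sum_ite_mem]
    have hXΩ : X ⊆ Ω := Finset.mem_powerset.1 (Finset.mem_filter.1 hX).1
    rw [Finset.inter_eq_right.2 hXΩ, Finset.sum_const, nsmul_eq_mul]
  have step3 : ∀ v ∈ Ω, ∑ X ∈ S, (if v ∈ X then Real.exp (-κ * X.card) else 0) ≤ 1 := by
    intro v _
    rw [← Finset.sum_filter]
    have heq : S.filter (fun X => v ∈ X)
        = Ω.powerset.filter (fun X => ZConnected X ∧ v ∈ X) := by
      rw [hS, Finset.filter_filter]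
    rw [heq]
    exact sum_exp_le_one hκ Ω v
  calc ∑ X ∈ S, Real.exp (-κ * X.card)
      ≤ ∑ v ∈ Ω, ∑ X ∈ S, (if v ∈ X then Real.exp (-κ * X.card) else 0) :=
        step1.trans (le_of_eq step2)
    _ ≤ ∑ v ∈ Ω, (1:ℝ) := Finset.sum_le_sum step3
    _ = (Ω.card : ℝ) := by rw [Finset.sum_const, nsmul_eq_mul, mul_one]

open scoped ENNReal in
/-- for `κ` large enough, for every `α ≥ 0` and every finite `Ω ⊆ ℤ³`,
the sum over all finite collections of pairwise distinct connected subsets of `Ω`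
of `Π_{X ∈ 𝒞} α e^{−κ|X|}` is at most `exp(α |Ω|)`. -/
theorem sum_over_collections_of_connected_sets :
    ∃ κ₀ : ℝ, 0 < κ₀ ∧ ∀ κ : ℝ, κ₀ ≤ κ → ∀ α : ℝ, 0 ≤ α →
      ∀ Ω : Finset (Fin 3 → ℤ),
      (∑' 𝒞 : {𝒞 : Finset (Finset (Fin 3 → ℤ)) // ∀ X ∈ 𝒞, X ⊆ Ω ∧ ZConnected X},
        ∏ X ∈ 𝒞.1, ENNReal.ofReal (α * Real.exp (-κ * (X.card : ℝ)))) ≤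
      ENNReal.ofReal (Real.exp (α * (Ω.card : ℝ))) := by
  classical
  refine ⟨8, by norm_num, ?_⟩
  intro κ hκ α hα Ω
  set S : Finset (Finset V3) := Ω.powerset.filter ZConnected with hS
  set w : Finset V3 → ℝ≥0∞ :=
    fun X => ENNReal.ofReal (α * Real.exp (-κ * (X.card : ℝ))) with hw
  have hiff : ∀ 𝒞 : Finset (Finset V3),
      (∀ X ∈ 𝒞, X ⊆ Ω ∧ ZConnected X) ↔ 𝒞 ∈ S.powerset := by
    intro 𝒞
    rw [Finset.mem_powerset]
    constructor
    · intro h X hX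
      exact Finset.mem_filter.2 ⟨Finset.mem_powerset.2 (h X hX).1, (h X hX).2⟩
    · intro h X hX
      have := Finset.mem_filter.1 (h hX)
      exact ⟨Finset.mem_powerset.1 this.1, this.2⟩
  have heq1 : (∑' 𝒞 : {𝒞 : Finset (Finset V3) // ∀ X ∈ 𝒞, X ⊆ Ω ∧ ZConnected X},
      ∏ X ∈ 𝒞.1, w X) = ∑ 𝒞 ∈ S.powerset, ∏ X ∈ 𝒞, w X := by
    rw [← Finset.tsum_subtype S.powerset (fun 𝒞 => ∏ X ∈ 𝒞, w X)]
    exact (Equiv.subtypeEquivRight hiff).tsum_eq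
      (fun 𝒞 : {𝒞 : Finset (Finset V3) // 𝒞 ∈ S.powerset} => ∏ X ∈ 𝒞.1, w X)
  have heq2 : ∑ 𝒞 ∈ S.powerset, ∏ X ∈ 𝒞, w X = ∏ X ∈ S, (w X + 1) := by
    rw [Finset.prod_add]
    apply Finset.sum_congr rfl
    intro 𝒞 _
    simp
  have hle3 : ∏ X ∈ S, (w X + 1)
      ≤ ∏ X ∈ S, ENNReal.ofReal (Real.exp (α * Real.exp (-κ * (X.card : ℝ)))) := by
    apply Finset.prod_le_prod' 
    intro X _
    have hr : 0 ≤ α * Real.exp (-κ * (X.card : ℝ)) := by positivity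
    rw [hw]
    calc ENNReal.ofReal (α * Real.exp (-κ * (X.card : ℝ))) + 1
        = ENNReal.ofReal (α * Real.exp (-κ * (X.card : ℝ)) + 1) := by
          rw [ENNReal.ofReal_add hr (by norm_num), ENNReal.ofReal_one]
      _ ≤ _ := ENNReal.ofReal_le_ofReal (Real.add_one_le_exp _)
  have heq4 : ∏ X ∈ S, ENNReal.ofReal (Real.exp (α * Real.exp (-κ * (X.card : ℝ))))
      = ENNReal.ofReal (Real.exp (∑ X ∈ S, α * Real.exp (-κ * (X.card : ℝ)))) := by
    rw [Real.exp_sum, ENNReal.ofReal_prod_of_nonneg]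
    intro X _
    positivity
  have hle5 : (∑ X ∈ S, α * Real.exp (-κ * (X.card : ℝ))) ≤ α * (Ω.card : ℝ) := by
    rw [← Finset.mul_sum]
    exact mul_le_mul_of_nonneg_left (total_sum hκ Ω) hα
  rw [heq1, heq2]
  refine hle3.trans ?_
  rw [heq4]
  exact ENNReal.ofReal_le_ofReal (Real.exp_le_exp.2 hle5)
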